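/- Let p, q, a, b be four points in the Euclidean plane ℝ² with p ≠ q, such that a and b lie strictly on opposite sides of the line through p and q, and b lies in the open circumdisc of p, q, a. Then every closed disc whose boundary circle passes through both p and q contains a or b in its interior; in other words, the edge pq is not Delaunay in the four-point set {p, q, a, b}. -/

import Mathlib

/-!
Kinetic Delaunay triangulations of points moving in the plane:
common definitions (trajectories, Delaunay edges, co-circularity and
collinearity events, general position assumptions, Delaunay crossings).
-/

noncomputable section

attribute [local instance] Classical.propDecidable

/-- The Euclidean plane. -/
abbrev Plane : Type := EuclideanSpace ℝ (Fin 2)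

/-- A point trajectory: a moving point in the plane, parametrized by time. -/
abbrev Traj : Type := ℝ → Plane

/-- Signed orientation of `x` with respect to the line through `a` and `b`,
oriented from `a` to `b`; positive iff `x` lies in the open left halfplane `L⁻`. -/
def orient (a b x : Plane) : ℝ :=
  (b 0 - a 0) * (x 1 - a 1) - (b 1 - a 1) * (x 0 - a 0)

/-- `x` lies in the open left halfplane `L⁻` of the line oriented from `a` to `b`. -/
def leftOf (a b x : Plane) : Prop := 0 < orient a b x

/-- `x` lies in the open right halfplane `L⁺` of the line oriented from `a` to `b`. -/
def rightOf (a b x : Plane) : Prop := orient a b x < 0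

/-- `x` and `y` lie strictly on opposite sides of the line through `a` and `b`. -/
def OppositeSides (a b x y : Plane) : Prop := orient a b x * orient a b y < 0

/-- Four points of the plane are concyclic. -/
def Concyclic4 (a b c d : Plane) : Prop :=
  ∃ (o : Plane) (ρ : ℝ), 0 < ρ ∧
    dist a o = ρ ∧ dist b o = ρ ∧ dist c o = ρ ∧ dist d o = ρ

/-- Five points of the plane are concyclic. -/
def Concyclic5 (a b c d e : Plane) : Prop :=
  ∃ (o : Plane) (ρ : ℝ), 0 < ρ ∧
    dist a o = ρ ∧ dist b o = ρ ∧ dist c o = ρ ∧ dist d o = ρ ∧ dist e o = ρ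

/-- `x` lies in the open circumdisc of `a`, `b`, `c` (for non-collinear `a`, `b`, `c`
the circle through them is unique, so this is the usual notion). -/
def InCircumdisc (a b c x : Plane) : Prop :=
  ∃ (o : Plane) (ρ : ℝ), dist a o = ρ ∧ dist b o = ρ ∧ dist c o = ρ ∧ dist x o < ρ

/-- `x` lies strictly outside the circumdisc of `a`, `b`, `c`. -/
def OutCircumdisc (a b c x : Plane) : Prop :=
  ∃ (o : Plane) (ρ : ℝ), dist a o = ρ ∧ dist b o = ρ ∧ dist c o = ρ ∧ ρ < dist x o

/-- The edge `pq` is Delaunay at time `t` with respect to the set `Q` of trajectories: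
there is a closed disc whose boundary circle passes through `p t` and `q t` and whose
interior contains no point of `Q` at time `t`. -/
def DelaunayEdge (Q : Finset Traj) (p q : Traj) (t : ℝ) : Prop :=
  ∃ (o : Plane) (ρ : ℝ), dist (p t) o = ρ ∧ dist (q t) o = ρ ∧
    ∀ x ∈ Q, ¬ dist (x t) o < ρ

/-- The four moving points `p, q, a, b` are concyclic at time `t`
(a co-circularity event). -/
def CocircAt (p q a b : Traj) (t : ℝ) : Prop :=
  Concyclic4 (p t) (q t) (a t) (b t)

/-- The three moving points `p, q, r` are collinear at time `t`
(a collinearity event). -/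
def CollinAt (p q r : Traj) (t : ℝ) : Prop :=
  Collinear ℝ ({p t, q t, r t} : Set Plane)

/-- Pairwise distinctness of four trajectories. -/
def Distinct4 (p q a b : Traj) : Prop :=
  p ≠ q ∧ p ≠ a ∧ p ≠ b ∧ q ≠ a ∧ q ≠ b ∧ a ≠ b

/-- Pairwise distinctness of three trajectories. -/
def Distinct3 (p q r : Traj) : Prop := p ≠ q ∧ p ≠ r ∧ q ≠ r

/-- The Delaunayhood of the edge `xy` is violated by the pair `u`, `v` at time `t`:
`u t` and `v t` lie strictly on opposite sides of the line through `x t` and `y t`,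
and `v t` lies in the open circumdisc of `x t`, `y t`, `u t`. -/
def ViolatedBy (x y u v : Traj) (t : ℝ) : Prop :=
  OppositeSides (x t) (y t) (u t) (v t) ∧ InCircumdisc (x t) (y t) (u t) (v t)

/-- General position assumptions on a finite set of moving points: the motions are
continuous, no two points ever coincide, no five points are ever concyclic, no four
are ever collinear, no two co-circularity or collinearity events occur simultaneously
and, at each such event, the involved point crosses the relevant circle or line
transversally. -/
structure GenPos (P : Finset Traj) : Prop where
  cont : ∀ p ∈ P, Continuous p
  never_coincide : ∀ p ∈ P, ∀ q ∈ P, p ≠ q → ∀ t : ℝ, p t ≠ q t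
  no_five_cocirc : ∀ t : ℝ, ∀ p ∈ P, ∀ q ∈ P, ∀ a ∈ P, ∀ b ∈ P, ∀ e ∈ P,
    Distinct4 p q a b → p ≠ e → q ≠ e → a ≠ e → b ≠ e →
    ¬ Concyclic5 (p t) (q t) (a t) (b t) (e t)
  no_four_collin : ∀ t : ℝ, ∀ p ∈ P, ∀ q ∈ P, ∀ a ∈ P, ∀ b ∈ P,
    Distinct4 p q a b → ¬ Collinear ℝ ({p t, q t, a t, b t} : Set Plane)
  unique_cocirc : ∀ t : ℝ, ∀ p ∈ P, ∀ q ∈ P, ∀ a ∈ P, ∀ b ∈ P,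
    ∀ p' ∈ P, ∀ q' ∈ P, ∀ a' ∈ P, ∀ b' ∈ P,
    Distinct4 p q a b → Distinct4 p' q' a' b' →
    CocircAt p q a b t → CocircAt p' q' a' b' t →
    ({p, q, a, b} : Set Traj) = ({p', q', a', b'} : Set Traj)
  unique_collin : ∀ t : ℝ, ∀ p ∈ P, ∀ q ∈ P, ∀ r ∈ P, ∀ p' ∈ P, ∀ q' ∈ P, ∀ r' ∈ P,
    Distinct3 p q r → Distinct3 p' q' r' →
    CollinAt p q r t → CollinAt p' q' r' t →
    ({p, q, r} : Set Traj) = ({p', q', r'} : Set Traj)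
  cocirc_collin_separate : ∀ t : ℝ, ∀ p ∈ P, ∀ q ∈ P, ∀ a ∈ P, ∀ b ∈ P,
    ∀ p' ∈ P, ∀ q' ∈ P, ∀ r' ∈ P,
    Distinct4 p q a b → Distinct3 p' q' r' →
    CocircAt p q a b t → ¬ CollinAt p' q' r' t
  circle_transversal : ∀ p ∈ P, ∀ q ∈ P, ∀ a ∈ P, ∀ b ∈ P, Distinct4 p q a b →
    ∀ t : ℝ, CocircAt p q a b t →
    ∃ δ > (0 : ℝ),
      ((∀ u ∈ Set.Ioo (t - δ) t, InCircumdisc (p u) (q u) (a u) (b u)) ∧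
        (∀ u ∈ Set.Ioo t (t + δ), OutCircumdisc (p u) (q u) (a u) (b u))) ∨
      ((∀ u ∈ Set.Ioo (t - δ) t, OutCircumdisc (p u) (q u) (a u) (b u)) ∧
        (∀ u ∈ Set.Ioo t (t + δ), InCircumdisc (p u) (q u) (a u) (b u)))
  line_transversal : ∀ p ∈ P, ∀ q ∈ P, ∀ r ∈ P, Distinct3 p q r →
    ∀ t : ℝ, CollinAt p q r t →
    ∃ δ > (0 : ℝ),
      ((∀ u ∈ Set.Ioo (t - δ) t, leftOf (p u) (q u) (r u)) ∧
        (∀ u ∈ Set.Ioo t (t + δ), rightOf (p u) (q u) (r u))) ∨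
      ((∀ u ∈ Set.Ioo (t - δ) t, rightOf (p u) (q u) (r u)) ∧
        (∀ u ∈ Set.Ioo t (t + δ), leftOf (p u) (q u) (r u)))

/-- Pseudo-algebraicity: any four points of `P` are concyclic at most `s` times. -/
def CocircBound (P : Finset Traj) (s : ℕ) : Prop :=
  ∀ p ∈ P, ∀ q ∈ P, ∀ a ∈ P, ∀ b ∈ P, Distinct4 p q a b →
    {t : ℝ | CocircAt p q a b t}.encard ≤ (s : ℕ∞)

/-- Pseudo-algebraicity: any three points of `P` are collinear at most `c` times. -/
def CollinBound (P : Finset Traj) (c : ℕ) : Prop :=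
  ∀ p ∈ P, ∀ q ∈ P, ∀ r ∈ P, Distinct3 p q r →
    {t : ℝ | CollinAt p q r t}.encard ≤ (c : ℕ∞)

/-- A Delaunay co-circularity event of `P` occurs at time `t`: some four (distinct)
points of `P` are concyclic at time `t`, and the open disc bounded by their common
circle contains no point of `P` at time `t`. -/
def DelaunayCocircAt (P : Finset Traj) (t : ℝ) : Prop :=
  ∃ p ∈ P, ∃ q ∈ P, ∃ a ∈ P, ∃ b ∈ P, Distinct4 p q a b ∧
    ∃ (o : Plane) (ρ : ℝ), 0 < ρ ∧
      dist (p t) o = ρ ∧ dist (q t) o = ρ ∧ dist (a t) o = ρ ∧ dist (b t) o = ρ ∧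
      ∀ x ∈ P, ¬ dist (x t) o < ρ

/-- A `k`-shallow co-circularity of `p, q, a, b` at time `t`: the four points are
concyclic and the open disc bounded by their common circle contains at most `k`
points of `P` at time `t`. -/
def ShallowCocircAt (P : Finset Traj) (k : ℕ) (p q a b : Traj) (t : ℝ) : Prop :=
  ∃ (o : Plane) (ρ : ℝ), 0 < ρ ∧
    dist (p t) o = ρ ∧ dist (q t) o = ρ ∧ dist (a t) o = ρ ∧ dist (b t) o = ρ ∧
    {x : Traj | x ∈ P ∧ dist (x t) o < ρ}.ncard ≤ k

/-- A `k`-shallow collinearity of `p, q, r` at time `t`: the three points are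
collinear and one of the two open halfplanes bounded by the line through them
contains at most `k` points of `P` at time `t`. -/
def ShallowCollinAt (P : Finset Traj) (k : ℕ) (p q r : Traj) (t : ℝ) : Prop :=
  CollinAt p q r t ∧ p t ≠ q t ∧
    ({x : Traj | x ∈ P ∧ leftOf (p t) (q t) (x t)}.ncard ≤ k ∨
      {x : Traj | x ∈ P ∧ rightOf (p t) (q t) (x t)}.ncard ≤ k)

/-- At time `t`, the point `r` lies on the segment `pq` and crosses it transversally
from the open halfplane `L⁻` (left of the oriented line `pq`) to `L⁺`. -/
def CrossesMinusPlus (p q r : Traj) (t : ℝ) : Prop :=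
  r t ∈ segment ℝ (p t) (q t) ∧
    ∃ δ > (0 : ℝ),
      (∀ u ∈ Set.Ioo (t - δ) t, leftOf (p u) (q u) (r u)) ∧
      (∀ u ∈ Set.Ioo t (t + δ), rightOf (p u) (q u) (r u))

/-- At time `t`, the point `r` lies on the segment `pq` and crosses it transversally
from `L⁺` to `L⁻`. -/
def CrossesPlusMinus (p q r : Traj) (t : ℝ) : Prop :=
  r t ∈ segment ℝ (p t) (q t) ∧
    ∃ δ > (0 : ℝ),
      (∀ u ∈ Set.Ioo (t - δ) t, rightOf (p u) (q u) (r u)) ∧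
      (∀ u ∈ Set.Ioo t (t + δ), leftOf (p u) (q u) (r u))

/-- A Delaunay crossing `(pq, r, [t₀, t₁])`: the edge `pq` is Delaunay with respect
to `P` at times `t₀` and `t₁` but at no time in `(t₀, t₁)`; `r` lies on the closed
segment `pq` at least once during `[t₀, t₁]`; and `pq` is Delaunay with respect to
`P ∖ {r}` throughout `[t₀, t₁]`. -/
structure DelaunayCrossing (P : Finset Traj) (p q r : Traj) (t₀ t₁ : ℝ) : Prop where
  lt : t₀ < t₁
  mem_p : p ∈ P
  mem_q : q ∈ P
  mem_r : r ∈ P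
  distinct : Distinct3 p q r
  del_start : DelaunayEdge P p q t₀
  del_end : DelaunayEdge P p q t₁
  not_del : ∀ t ∈ Set.Ioo t₀ t₁, ¬ DelaunayEdge P p q t
  hits : ∃ t ∈ Set.Icc t₀ t₁, r t ∈ segment ℝ (p t) (q t)
  del_erase : ∀ t ∈ Set.Icc t₀ t₁, DelaunayEdge (P.erase r) p q t

/-- A single Delaunay crossing, with the convention that `r` crosses the segment
`pq` from `L⁻` to `L⁺`: a Delaunay crossing in which `r` lies on the segment `pq`
at exactly one time of `[t₀, t₁]`, where it crosses from `L⁻` to `L⁺`.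
(It is a clockwise `(p, r)`-crossing and a counterclockwise `(q, r)`-crossing.) -/
structure SingleCrossing (P : Finset Traj) (p q r : Traj) (t₀ t₁ : ℝ) : Prop where
  crossing : DelaunayCrossing P p q r t₀ t₁
  unique_hit : ∀ t ∈ Set.Icc t₀ t₁, ∀ t' ∈ Set.Icc t₀ t₁,
    r t ∈ segment ℝ (p t) (q t) → r t' ∈ segment ℝ (p t') (q t') → t = t'
  dir : ∀ t ∈ Set.Icc t₀ t₁, r t ∈ segment ℝ (p t) (q t) → CrossesMinusPlus p q r t

/-- A double Delaunay crossing: a Delaunay crossing in which `r` lies on the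
segment `pq` at exactly two times of `[t₀, t₁]`. -/
structure DoubleCrossing (P : Finset Traj) (p q r : Traj) (t₀ t₁ : ℝ) : Prop where
  crossing : DelaunayCrossing P p q r t₀ t₁
  two_hits : ∃ u v : ℝ, u ∈ Set.Icc t₀ t₁ ∧ v ∈ Set.Icc t₀ t₁ ∧ u ≠ v ∧
    r u ∈ segment ℝ (p u) (q u) ∧ r v ∈ segment ℝ (p v) (q v) ∧
    ∀ t ∈ Set.Icc t₀ t₁, r t ∈ segment ℝ (p t) (q t) → t = u ∨ t = v

/-- The point `s` enters the cap `B[p,q,r] ∩ L⁺_pq` at time `t`: just before `t` it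
lies strictly outside the circumdisc `B[p,q,r]`, and just after `t` it lies inside
`B[p,q,r]` and in the open right halfplane `L⁺` of the oriented line `pq`. -/
def EntersCapPlus (p q r s : Traj) (t : ℝ) : Prop :=
  ∃ δ > (0 : ℝ),
    (∀ u ∈ Set.Ioo (t - δ) t, OutCircumdisc (p u) (q u) (r u) (s u)) ∧
    (∀ u ∈ Set.Ioo t (t + δ),
      InCircumdisc (p u) (q u) (r u) (s u) ∧ rightOf (p u) (q u) (s u))

/-- The point `s` leaves the cap `B[p,q,r] ∩ L⁻_pq` at time `t`: just before `t` it
lies inside the circumdisc `B[p,q,r]` and in the open left halfplane `L⁻` of the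
oriented line `pq`, and just after `t` it lies strictly outside `B[p,q,r]`. -/
def LeavesCapMinus (p q r s : Traj) (t : ℝ) : Prop :=
  ∃ δ > (0 : ℝ),
    (∀ u ∈ Set.Ioo (t - δ) t,
      InCircumdisc (p u) (q u) (r u) (s u) ∧ leftOf (p u) (q u) (s u)) ∧
    (∀ u ∈ Set.Ioo t (t + δ), OutCircumdisc (p u) (q u) (r u) (s u))

lemma statement14_dist_sq (x y : Plane) :
    dist x y ^ 2 = (x 0 - y 0) ^ 2 + (x 1 - y 1) ^ 2 := by
  rw [EuclideanSpace.dist_eq, Real.sq_sqrt (by positivity)]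
  simp [Fin.sum_univ_two, Real.dist_eq, sq_abs]

set_option maxHeartbeats 1000000 in
lemma statement14_aux (p0 p1 q0 q1 a0 a1 b0 b1 c0 c1 e0 e1 R R0 : ℝ)
    (h1 : (p0 - e0) ^ 2 + (p1 - e1) ^ 2 = R0)
    (h2 : (q0 - e0) ^ 2 + (q1 - e1) ^ 2 = R0)
    (h3 : (a0 - e0) ^ 2 + (a1 - e1) ^ 2 = R0)
    (h4 : (b0 - e0) ^ 2 + (b1 - e1) ^ 2 < R0)
    (h5 : (p0 - c0) ^ 2 + (p1 - c1) ^ 2 = R)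
    (h6 : (q0 - c0) ^ 2 + (q1 - c1) ^ 2 = R)
    (hO : ((q0 - p0) * (a1 - p1) - (q1 - p1) * (a0 - p0)) *
          ((q0 - p0) * (b1 - p1) - (q1 - p1) * (b0 - p0)) < 0) :
    (a0 - c0) ^ 2 + (a1 - c1) ^ 2 < R ∨ (b0 - c0) ^ 2 + (b1 - c1) ^ 2 < R := by
  by_contra hcon
  push_neg at hcon
  obtain ⟨hA, hB⟩ := hcon
  set Oa : ℝ := (q0 - p0) * (a1 - p1) - (q1 - p1) * (a0 - p0) with hOa
  set Ob : ℝ := (q0 - p0) * (b1 - p1) - (q1 - p1) * (b0 - p0) with hOb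
  set La : ℝ := (a0 - c0) ^ 2 + (a1 - c1) ^ 2 - R with hLa
  set Lb : ℝ := (b0 - c0) ^ 2 + (b1 - c1) ^ 2 - R
      - ((b0 - e0) ^ 2 + (b1 - e1) ^ 2) + R0 with hLb
  have hLa0 : 0 ≤ La := by simp [hLa]; linarith
  have hLb0 : 0 < Lb := by simp [hLb]; linarith
  have key : La * Ob = Lb * Oa := by
    rw [hLa, hLb, hOa, hOb]
    linear_combination
      (((q0 - p0) * (b1 - p1) - (q1 - p1) * (b0 - p0))
        - ((q0 - p0) * (a1 - p1) - (q1 - p1) * (a0 - p0))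
        - ((a0 - p0) * (b1 - p1) - (a1 - p1) * (b0 - p0))) * (h5 - h1)
      + ((a0 - p0) * (b1 - p1) - (a1 - p1) * (b0 - p0)) * (h6 - h2)
      + ((q0 - p0) * (b1 - p1) - (q1 - p1) * (b0 - p0)) * h3
  have h8 : La * (Oa * Ob) ≤ 0 := mul_nonpos_iff.mpr (Or.inl ⟨hLa0, hO.le⟩)
  have h9 : La * (Oa * Ob) = Lb * Oa ^ 2 := by linear_combination Oa * key
  have h10 : Lb * Oa ^ 2 ≤ Lb * 0 := by rw [mul_zero]; linarith
  have hOa2 : Oa ^ 2 ≤ 0 := (mul_le_mul_iff_right₀ hLb0).mp h10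
  have hOa0 : Oa = 0 := (pow_eq_zero_iff two_ne_zero).mp (le_antisymm hOa2 (sq_nonneg Oa))
  rw [hOa0, zero_mul] at hO
  exact lt_irrefl 0 hO

/-- For `p ≠ q`, points `a`, `b` strictly on opposite sides of the
line through `p` and `q` with `b` in the open circumdisc of `p,q,a`: every closed
disc whose boundary circle passes through `p` and `q` contains `a` or `b` in its
interior; in other words, the edge `pq` is not Delaunay in the set `{p,q,a,b}`. -/
theorem statement14 (p q a b : Plane) (hpq : p ≠ q)
    (hopp : OppositeSides p q a b)
    (hin : InCircumdisc p q a b) :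
    (∀ (o : Plane) (ρ : ℝ), dist p o = ρ → dist q o = ρ →
      dist a o < ρ ∨ dist b o < ρ) ∧
    ¬ ∃ (o : Plane) (ρ : ℝ), dist p o = ρ ∧ dist q o = ρ ∧
        ∀ x ∈ ({p, q, a, b} : Set Plane), ¬ dist x o < ρ := by
  obtain ⟨e, ρ₀, h1, h2, h3, h4⟩ := hin
  have hb0 : (0 : ℝ) ≤ dist b e := dist_nonneg
  have hρ₀ : 0 ≤ ρ₀ := h1 ▸ dist_nonneg
  have main : ∀ (o : Plane) (ρ : ℝ), dist p o = ρ → dist q o = ρ →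
      dist a o < ρ ∨ dist b o < ρ := by
    intro o ρ h5 h6
    have hρ : 0 ≤ ρ := h5 ▸ dist_nonneg
    have e1 : (p 0 - e 0) ^ 2 + (p 1 - e 1) ^ 2 = ρ₀ ^ 2 := by
      rw [← statement14_dist_sq, h1]
    have e2 : (q 0 - e 0) ^ 2 + (q 1 - e 1) ^ 2 = ρ₀ ^ 2 := by
      rw [← statement14_dist_sq, h2]
    have e3 : (a 0 - e 0) ^ 2 + (a 1 - e 1) ^ 2 = ρ₀ ^ 2 := by
      rw [← statement14_dist_sq, h3]
    have e4 : (b 0 - e 0) ^ 2 + (b 1 - e 1) ^ 2 < ρ₀ ^ 2 := by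
      rw [← statement14_dist_sq]; nlinarith
    have e5 : (p 0 - o 0) ^ 2 + (p 1 - o 1) ^ 2 = ρ ^ 2 := by
      rw [← statement14_dist_sq, h5]
    have e6 : (q 0 - o 0) ^ 2 + (q 1 - o 1) ^ 2 = ρ ^ 2 := by
      rw [← statement14_dist_sq, h6]
    have hO : ((q 0 - p 0) * (a 1 - p 1) - (q 1 - p 1) * (a 0 - p 0)) *
        ((q 0 - p 0) * (b 1 - p 1) - (q 1 - p 1) * (b 0 - p 0)) < 0 := hopp
    rcases statement14_aux (p 0) (p 1) (q 0) (q 1) (a 0) (a 1) (b 0) (b 1)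
        (o 0) (o 1) (e 0) (e 1) (ρ ^ 2) (ρ₀ ^ 2) e1 e2 e3 e4 e5 e6 hO with h | h
    · left
      have : dist a o ^ 2 < ρ ^ 2 := by rw [statement14_dist_sq]; exact h
      exact lt_of_pow_lt_pow_left₀ 2 hρ this
    · right
      have : dist b o ^ 2 < ρ ^ 2 := by rw [statement14_dist_sq]; exact h
      exact lt_of_pow_lt_pow_left₀ 2 hρ this
  refine ⟨main, ?_⟩
  rintro ⟨o, ρ, h5, h6, hx⟩
  rcases main o ρ h5 h6 with h | h
  · exact hx a (by simp) h
  · exact hx b (by simp) h
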